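/- Let p ≥ 2 be an integer and V_k the Halley iterates for x^p = 1-z starting at 1. Then near z = 0, V_k(z) - (1-z)^{1/p} = O(z^{3^k}), where (1-z)^{1/p} is the principal pth root. -/

import Mathlib

open Asymptotics Finset

private lemma halley_key (p : ℕ) (hp : 1 ≤ p) (w x : ℂ) :
    x * (((p : ℂ) - 1) * x ^ p + ((p : ℂ) + 1) * w ^ p) -
      w * (((p : ℂ) + 1) * x ^ p + ((p : ℂ) - 1) * w ^ p) =
    ∑ j ∈ Finset.Icc 3 (p + 1),
      (((p : ℂ) - 1) * ((p + 1).choose j) - ((p : ℂ) + 1) * (p.choose j)) *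
        (w ^ (p + 1 - j) * (x - w) ^ j) := by
  obtain ⟨t, rfl⟩ : ∃ t, x = w + t := ⟨x - w, by ring⟩
  have hsub : w + t - w = t := by ring
  rw [hsub]
  set c : ℕ → ℂ := fun j =>
    ((p : ℂ) - 1) * ((p + 1).choose j) - ((p : ℂ) + 1) * (p.choose j) with hc
  -- full-range sum
  have h1 : (t + w) ^ (p + 1) =
      ∑ j ∈ Finset.range (p + 2), ((p + 1).choose j : ℂ) * (w ^ (p + 1 - j) * t ^ j) := by
    rw [add_pow]
    exact Finset.sum_congr rfl fun j _ => by ring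
  have h2 : w * (t + w) ^ p =
      ∑ j ∈ Finset.range (p + 2), (p.choose j : ℂ) * (w ^ (p + 1 - j) * t ^ j) := by
    rw [Finset.sum_range_succ, Nat.choose_succ_self, Nat.cast_zero, zero_mul, add_zero,
      add_pow, Finset.mul_sum]
    refine Finset.sum_congr rfl fun j hj => ?_
    rw [Finset.mem_range] at hj
    have : p + 1 - j = (p - j) + 1 := by omega
    rw [this, pow_succ]
    ring
  have hS : ∑ j ∈ Finset.range (p + 2), c j * (w ^ (p + 1 - j) * t ^ j) =
      ((p : ℂ) - 1) * (t + w) ^ (p + 1) - ((p : ℂ) + 1) * (w * (t + w) ^ p) := by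
    rw [h1, h2, Finset.mul_sum, Finset.mul_sum, ← Finset.sum_sub_distrib]
    exact Finset.sum_congr rfl fun j _ => by rw [hc]; ring
  have hsplit : ∑ j ∈ Finset.range 3, c j * (w ^ (p + 1 - j) * t ^ j) +
      ∑ j ∈ Finset.Ico 3 (p + 2), c j * (w ^ (p + 1 - j) * t ^ j) =
      ∑ j ∈ Finset.range (p + 2), c j * (w ^ (p + 1 - j) * t ^ j) :=
    Finset.sum_range_add_sum_Ico _ (by omega)
  have hIcc : Finset.Icc 3 (p + 1) = Finset.Ico 3 (p + 2) := by
    rw [← Finset.Ico_add_one_right_eq_Icc]; rfl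
  rw [hIcc]
  have hgoal : ∑ j ∈ Finset.Ico 3 (p + 2), c j * (w ^ (p + 1 - j) * t ^ j) =
      ∑ j ∈ Finset.range (p + 2), c j * (w ^ (p + 1 - j) * t ^ j) -
        ∑ j ∈ Finset.range 3, c j * (w ^ (p + 1 - j) * t ^ j) := by
    rw [← hsplit]; ring
  -- compute the first three terms
  have hr3 : ∑ j ∈ Finset.range 3, c j * (w ^ (p + 1 - j) * t ^ j) =
      c 0 * (w ^ (p + 1) * t ^ 0) + c 1 * (w ^ p * t ^ 1) + c 2 * (w ^ (p + 1 - 2) * t ^ 2) := by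
    rw [Finset.sum_range_succ, Finset.sum_range_succ, Finset.sum_range_one]
    simp only [Nat.sub_zero, Nat.add_sub_cancel]
  have hc0 : c 0 = -2 := by
    show ((p : ℂ) - 1) * ((p + 1).choose 0) - ((p : ℂ) + 1) * (p.choose 0) = -2
    simp
    ring
  have hc1 : c 1 = -((p : ℂ) + 1) := by
    show ((p : ℂ) - 1) * ((p + 1).choose 1) - ((p : ℂ) + 1) * (p.choose 1) = -((p : ℂ) + 1)
    simp
    ring
  have hc2 : c 2 = 0 := by
    show ((p : ℂ) - 1) * ((p + 1).choose 2) - ((p : ℂ) + 1) * (p.choose 2) = 0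
    rw [Nat.cast_choose_two, Nat.cast_choose_two]
    push_cast
    ring
  have hpow : (t + w) ^ (p + 1) = (t + w) ^ p * (t + w) := pow_succ _ _
  rw [hgoal, hS, hr3, hc0, hc1, hc2, hpow]
  ring

private lemma pow_isBigO_pow_ccc {m n : ℕ} (h : n ≤ m) :
    (fun z : ℂ => z ^ m) =O[nhds 0] fun z : ℂ => z ^ n := by
  have h1 : (fun z : ℂ => z ^ (m - n)) =O[nhds 0] (fun _ : ℂ => (1 : ℂ)) := by
    exact ((continuous_pow (m - n)).continuousAt (x := (0:ℂ))).tendsto.isBigO_one ℂ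
  have h2 := (isBigO_refl (fun z : ℂ => z ^ n) (nhds 0)).mul h1
  refine h2.congr (fun z => ?_) (fun z => ?_)
  · rw [← pow_add]; congr 1; omega
  · rw [mul_one]

open Asymptotics in
theorem stmt_16 (p : ℕ) (hp : 2 ≤ p) (V : ℕ → ℂ → ℂ)
    (hV0 : ∀ z, V 0 z = 1)
    (hV : ∀ k z, V (k + 1) z =
      V k z * ((p - 1) * (V k z) ^ p + (p + 1) * (1 - z)) /
        ((p + 1) * (V k z) ^ p + (p - 1) * (1 - z))) (k : ℕ) :
    (fun z : ℂ => V k z - (1 - z) ^ ((p : ℂ)⁻¹)) =O[nhds 0]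
      fun z : ℂ => z ^ (3 ^ k) := by
  have hp0 : (p : ℂ) ≠ 0 := Nat.cast_ne_zero.mpr (by omega)
  set w : ℂ → ℂ := fun z => (1 - z) ^ ((p : ℂ)⁻¹) with hwdef
  have hw0 : w 0 = 1 := by simp [hwdef]
  have hwp : ∀ z : ℂ, w z ^ p = 1 - z := fun z =>
    Complex.cpow_nat_inv_pow _ (by omega : p ≠ 0)
  have hslit : (1 : ℂ) - 0 ∈ Complex.slitPlane := by
    rw [sub_zero]; exact Complex.one_mem_slitPlane
  have hwc : ContinuousAt w 0 := by
    have hbase : ContinuousAt (fun z : ℂ => 1 - z) 0 :=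
      (continuous_const.sub continuous_id).continuousAt
    exact (continuousAt_cpow_const hslit).comp hbase
  have hwd : DifferentiableAt ℂ w 0 := by
    have hbase : HasDerivAt (fun z : ℂ => 1 - z) (-1) 0 := by
      simpa using (hasDerivAt_id (0 : ℂ)).const_sub 1
    exact (hbase.cpow_const hslit).differentiableAt
  -- main induction
  suffices H : ∀ k, V k 0 = 1 ∧ ContinuousAt (V k) 0 ∧
      (fun z : ℂ => V k z - w z) =O[nhds 0] fun z : ℂ => z ^ (3 ^ k) from (H k).2.2
  intro k
  induction k with
  | zero =>
    refine ⟨hV0 0, ?_, ?_⟩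
    · have : V 0 = fun _ => (1 : ℂ) := funext hV0
      rw [this]; exact continuousAt_const
    · have h1 := hwd.isBigO_sub
      have h2 : (fun z : ℂ => -(w z - w 0)) =O[nhds 0] fun z : ℂ => z - 0 := h1.neg_left
      refine h2.congr (fun z => ?_) (fun z => ?_)
      · rw [hw0, hV0]; ring
      · rw [sub_zero, pow_zero, pow_one]
  | succ k ih =>
    obtain ⟨h0, hc, hO⟩ := ih
    set den : ℂ → ℂ := fun z => ((p : ℂ) + 1) * (V k z) ^ p + ((p : ℂ) - 1) * (1 - z)
      with hden
    set num : ℂ → ℂ := fun z => V k z * (((p : ℂ) - 1) * (V k z) ^ p + ((p : ℂ) + 1) * (1 - z))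
      with hnum
    have hVs : ∀ z, V (k + 1) z = num z / den z := hV k
    have hden0 : den 0 = 2 * p := by
      rw [hden]; simp only [h0, one_pow, mul_one, sub_zero]; ring
    have hdenne : den 0 ≠ 0 := by rw [hden0]; intro h; apply hp0; field_simp at h; exact (mul_eq_zero.mp h).resolve_left two_ne_zero
    have hdenc : ContinuousAt den 0 := by
      apply ContinuousAt.add
      · exact continuousAt_const.mul (hc.pow p)
      · exact continuousAt_const.mul (continuous_const.sub continuous_id).continuousAt
    have hnumc : ContinuousAt num 0 := by
      apply hc.mul
      apply ContinuousAt.add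
      · exact continuousAt_const.mul (hc.pow p)
      · exact continuousAt_const.mul (continuous_const.sub continuous_id).continuousAt
    have hV1 : V (k + 1) 0 = 1 := by
      rw [hVs 0, hnum, hden]
      simp only [h0, one_pow, mul_one, sub_zero, one_mul]
      have he : ((p : ℂ) - 1 + ((p : ℂ) + 1)) = ((p : ℂ) + 1 + ((p : ℂ) - 1)) := by ring
      rw [he]
      exact div_self (by intro h; apply hp0; linear_combination h / 2)
    constructor
    · exact hV1
    constructor
    · have : V (k + 1) = fun z => num z / den z := funext hVs
      rw [this]
      exact hnumc.div hdenc hdenne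
    -- the big-O part
    have hne : ∀ᶠ z in nhds 0, den z ≠ 0 := hdenc.eventually_ne hdenne
    set c : ℕ → ℂ := fun j =>
      ((p : ℂ) - 1) * ((p + 1).choose j) - ((p : ℂ) + 1) * (p.choose j) with hcdef
    set G : ℂ → ℂ := fun z =>
      ∑ j ∈ Finset.Icc 3 (p + 1), c j * ((w z) ^ (p + 1 - j) * (V k z - w z) ^ j) with hGdef
    have heq : (fun z => V (k + 1) z - w z) =ᶠ[nhds 0] fun z => G z * (den z)⁻¹ := by
      filter_upwards [hne] with z hz
      have hkey := halley_key p (by omega) (w z) (V k z)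
      rw [hwp z] at hkey
      rw [hVs z, div_sub' hz, div_eq_mul_inv]
      simp only [hGdef, hcdef]
      congr 1
      linear_combination hkey
    have hGO : G =O[nhds 0] fun z : ℂ => z ^ (3 ^ (k + 1)) := by
      rw [hGdef]
      apply IsBigO.fun_sum
      intro j hj
      rw [Finset.mem_Icc] at hj
      have hwO : (fun z => (w z) ^ (p + 1 - j)) =O[nhds 0] (fun _ : ℂ => (1 : ℂ)) :=
        (hwc.pow (p + 1 - j)).tendsto.isBigO_one ℂ
      have htO : (fun z => (V k z - w z) ^ j) =O[nhds 0] fun z : ℂ => z ^ (3 ^ (k + 1)) := by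
        have h1 := hO.pow j
        have h2 : (fun z : ℂ => (z ^ 3 ^ k) ^ j) = fun z : ℂ => z ^ (3 ^ k * j) := by
          funext z; rw [← pow_mul]
        rw [h2] at h1
        exact h1.trans (pow_isBigO_pow_ccc (by
          have : 3 ^ (k + 1) = 3 ^ k * 3 := pow_succ 3 k
          rw [this]
          exact Nat.mul_le_mul_left _ hj.1))
      have := (hwO.mul htO).const_mul_left (c j)
      refine this.congr (fun z => rfl) (fun z => ?_)
      rw [one_mul]
    have hiO : (fun z => (den z)⁻¹) =O[nhds 0] (fun _ : ℂ => (1 : ℂ)) :=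
      ((hdenc.inv₀ hdenne).tendsto).isBigO_one ℂ
    have := (hGO.mul hiO).congr_left (fun z => rfl)
    refine (IsBigO.congr' (this.congr (fun z => rfl) (fun z => by rw [mul_one])) heq.symm
      (Filter.EventuallyEq.refl _ _))
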